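/- Let q : V → K be a non-degenerate quadratic form on a vector space of odd finite dimension over a field K with char K ≠ 2. Then every multiplier of a similitude of q is a square in K^×, and GO(q) = K^×·SO(q). -/

import Mathlib

/-- For a non-degenerate quadratic form on an odd-dimensional space over a field
of characteristic ≠ 2, every multiplier of a similitude is a square, and every
similitude is a scalar multiple of a special orthogonal transformation. -/
theorem similitudes_odd_dim {K V : Type*} [Field K] [AddCommGroup V] [Module K V]
    [FiniteDimensional K V]
    (h2 : (2 : K) ≠ 0)
    (hodd : Odd (Module.finrank K V))
    (q : QuadraticForm K V)
    (hnd : ∀ v : V, (∀ w : V, QuadraticMap.polar q v w = 0) → v = 0)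
    (φ : V ≃ₗ[K] V) (s : K) (hs : s ≠ 0)
    (hsim : ∀ v, q (φ v) = s * q v) :
    (∃ c : K, s = c ^ 2) ∧
    ∃ c : K, c ≠ 0 ∧ ∃ ψ : V ≃ₗ[K] V,
      (∀ v, q (ψ v) = q v) ∧ LinearMap.det (ψ : V →ₗ[K] V) = 1 ∧
      ∀ v, φ v = c • ψ v := by
  obtain ⟨k, hk⟩ := hodd
  set n := Module.finrank K V with hn
  -- polar transforms with multiplier s
  have hpolar : ∀ v w, QuadraticMap.polar q (φ v) (φ w) = s * QuadraticMap.polar q v w := by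
    intro v w
    unfold QuadraticMap.polar
    rw [← map_add, hsim, hsim, hsim]
    ring
  -- set up matrices
  let b := Module.finBasis K V
  set B : LinearMap.BilinForm K V := q.polarBilin with hB
  have hBnd : B.Nondegenerate := by
    constructor
    · intro v hv
      exact hnd v hv
    · intro v hv
      exact hnd v fun w => by rw [QuadraticMap.polar_comm]; exact hv w
  set M := LinearMap.BilinForm.toMatrix b B with hMdef
  set P := LinearMap.toMatrix b b (φ : V →ₗ[K] V) with hPdef
  have hcomp : B.comp (φ : V →ₗ[K] V) (φ : V →ₗ[K] V) = s • B := by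
    ext v w
    simpa [hB] using hpolar v w
  have hMmat : P.transpose * M * P = s • M := by
    rw [hPdef, hMdef, ← BilinForm.toMatrix_comp b b, hcomp, map_smul]
  have hMdet : M.det ≠ 0 :=
    (LinearMap.BilinForm.nondegenerate_iff_det_ne_zero b).mp hBnd
  set d := LinearMap.det (φ : V →ₗ[K] V) with hd
  have hPd : P.det = d := LinearMap.det_toMatrix b _
  have hdet : d ^ 2 * M.det = s ^ n * M.det := by
    have := congrArg Matrix.det hMmat
    rw [Matrix.det_mul, Matrix.det_mul, Matrix.det_transpose, Matrix.smul_eq_mul_diagonal] at this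
    rw [Matrix.det_mul, Matrix.det_diagonal] at this
    simp only [Finset.prod_const, Finset.card_univ, Fintype.card_fin, hPd] at this
    rw [sq]
    linear_combination this
  have hd2 : d ^ 2 = s ^ n := by
    exact mul_right_cancel₀ hMdet hdet
  have hsk : (s : K) ^ k ≠ 0 := pow_ne_zero _ hs
  have hdne : d ≠ 0 := by
    intro h
    rw [h] at hd2
    simp at hd2
    exact hs (pow_eq_zero_iff (by omega) |>.mp hd2.symm)
  -- the square root of s
  set c : K := d / s ^ k with hc
  have hcne : c ≠ 0 := div_ne_zero hdne hsk
  have hcsq : c ^ 2 = s := by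
    rw [hc, div_pow, div_eq_iff (pow_ne_zero 2 hsk), hd2, hk, ← pow_mul, pow_succ]
    ring
  have hcn : c ^ n = d := by
    rw [hk, pow_add, pow_mul, hcsq, pow_one, hc]
    field_simp
  refine ⟨⟨c, hcsq.symm⟩, c, hcne, ?_⟩
  -- build ψ = c⁻¹ • φ
  let ψ : V ≃ₗ[K] V := φ.trans (LinearEquiv.smulOfNeZero K V c⁻¹ (inv_ne_zero hcne))
  have hψ : ∀ v, ψ v = c⁻¹ • φ v := fun v => rfl
  have hψlin : (ψ : V →ₗ[K] V) = c⁻¹ • (φ : V →ₗ[K] V) := by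
    ext v; simp [hψ]
  refine ⟨ψ, ?_, ?_, ?_⟩
  · intro v
    rw [hψ, QuadraticMap.map_smul, hsim, smul_eq_mul]
    field_simp
    rw [← hcsq]
  · rw [hψlin, LinearMap.det_smul, ← hd, ← hn, inv_pow, hcn]
    field_simp
  · intro v
    rw [hψ, smul_smul]
    field_simp
    rw [one_smul]
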